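/- Well-posedness of one step of the semi-explicit Euler scheme: for every step size τ > 0, every u⁰ ∈ V, p⁰ ∈ Q, f ∈ V*, g ∈ Q*, there exists a unique pair (u¹, p¹) ∈ V × Q such that a(u¹, v) − d(v, p⁰) = f(v) for all v ∈ V and d(u¹ − u⁰, q) + c(p¹ − p⁰, q) + τ b(u¹; p¹, q) = τ g(q) for all q ∈ Q. -/

import Mathlib

open MeasureTheory Real

set_option maxHeartbeats 1000000

/-- Lax–Milgram for an abstract (not necessarily symmetric) bilinear form given by
bounds on a plain linear map. -/
lemma laxMilgram_existsUnique {E : Type*} [NormedAddCommGroup E] [InnerProductSpace ℝ E]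
    [CompleteSpace E]
    (B : E →ₗ[ℝ] E →ₗ[ℝ] ℝ) (M μ K : ℝ) (hμ : 0 < μ)
    (hbound : ∀ p q, |B p q| ≤ M * ‖p‖ * ‖q‖)
    (hcoer : ∀ p, μ * ‖p‖ ^ 2 ≤ B p p)
    (F : E →ₗ[ℝ] ℝ) (hF : ∀ q, |F q| ≤ K * ‖q‖) :
    ∃! p : E, ∀ q : E, B p q = F q := by
  set B' : E →L[ℝ] E →L[ℝ] ℝ :=
    LinearMap.mkContinuous₂ B M (fun x y => by simpa using hbound x y) with hB'
  have hB'app : ∀ p q, B' p q = B p q := fun p q => rfl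
  have coercive : IsCoercive B' := by
    refine ⟨μ, hμ, fun u => ?_⟩
    have := hcoer u
    rw [hB'app]
    nlinarith [this]
  set F' : E →L[ℝ] ℝ := F.mkContinuous K (fun q => by simpa using hF q) with hF'
  have hF'app : ∀ q, F' q = F q := fun q => rfl
  set w : E := (InnerProductSpace.toDual ℝ E).symm F' with hw
  have hwq : ∀ q, inner ℝ w q = F' q :=
    fun q => InnerProductSpace.toDual_symm_apply (y := F') (x := q)
  refine ⟨coercive.continuousLinearEquivOfBilin.symm w, fun q => ?_, ?_⟩
  · have := coercive.continuousLinearEquivOfBilin_apply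
      (coercive.continuousLinearEquivOfBilin.symm w) q
    rw [ContinuousLinearEquiv.apply_symm_apply] at this
    rw [← hB'app, ← this, hwq, hF'app]
  · intro p hp
    have hp0 : ∀ q, inner ℝ w q = B' p q := fun q => by
      rw [hwq, hF'app, hB'app, hp q]
    have := coercive.unique_continuousLinearEquivOfBilin hp0
    rw [this, ContinuousLinearEquiv.symm_apply_apply]

/-- Well-posedness of one step of the semi-explicit Euler scheme. -/
theorem semi_explicit_euler_step_wellposed
    {V Q HV HQ : Type*}
    [NormedAddCommGroup V] [InnerProductSpace ℝ V] [CompleteSpace V]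
    [NormedAddCommGroup Q] [InnerProductSpace ℝ Q] [CompleteSpace Q]
    [NormedAddCommGroup HV] [InnerProductSpace ℝ HV] [CompleteSpace HV]
    [NormedAddCommGroup HQ] [InnerProductSpace ℝ HQ] [CompleteSpace HQ]
    (ιV : V →L[ℝ] HV) (hιV : Function.Injective ιV)
    (ιQ : Q →L[ℝ] HQ) (hιQ : Function.Injective ιQ)
    (c_a C_a c_c C_c C_d L_b c_b : ℝ)
    (hca : 0 < c_a) (hCa : 0 < C_a) (hcc : 0 < c_c) (hCc : 0 < C_c)
    (hLb : 0 < L_b) (hcb : 0 < c_b)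
    (a : V →ₗ[ℝ] V →ₗ[ℝ] ℝ) (ha_symm : ∀ u v : V, a u v = a v u)
    (ha_lower : ∀ u : V, c_a * ‖u‖ ^ 2 ≤ a u u)
    (ha_upper : ∀ u : V, a u u ≤ C_a ^ 2 * ‖u‖ ^ 2)
    (c : Q →ₗ[ℝ] Q →ₗ[ℝ] ℝ) (hc_symm : ∀ p q : Q, c p q = c q p)
    (hc_lower : ∀ p : Q, c_c * ‖ιQ p‖ ^ 2 ≤ c p p)
    (hc_bound : ∀ p q : Q, |c p q| ≤ C_c * ‖ιQ p‖ * ‖ιQ q‖)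
    (d : V →ₗ[ℝ] Q →ₗ[ℝ] ℝ)
    (hd_bound : ∀ (u : V) (p : Q), |d u p| ≤ C_d * ‖u‖ * ‖ιQ p‖)
    (b : V → Q →ₗ[ℝ] Q →ₗ[ℝ] ℝ)
    (hb_lipp : ∀ (u : V) (p₁ p₂ q : Q), |b u p₁ q - b u p₂ q| ≤ L_b * ‖p₁ - p₂‖ * ‖q‖)
    (hb_coer : ∀ (u : V) (p : Q), c_b * ‖p‖ ^ 2 ≤ b u p p)
    (τ : ℝ) (hτ : 0 < τ)
    (u0 : V) (p0 : Q) (f : V →L[ℝ] ℝ) (g : Q →L[ℝ] ℝ) :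
    ∃! up : V × Q,
      (∀ v : V, a up.1 v - d v p0 = f v) ∧
      (∀ q : Q, d (up.1 - u0) q + c (up.2 - p0) q + τ * b up.1 up.2 q = τ * g q) := by
  -- Cauchy–Schwarz for the symmetric coercive form `a`
  have ha_cs : ∀ u v : V, |a u v| ≤ C_a ^ 2 * ‖u‖ * ‖v‖ := by
    intro u v
    have hq : ∀ t : ℝ, 0 ≤ (a v v) * (t * t) + (2 * a u v) * t + a u u := by
      intro t
      have h2 : a (u + t • v) (u + t • v)
          = (a v v) * (t * t) + (2 * a u v) * t + a u u := by
        simp [map_add, _root_.map_smul, LinearMap.add_apply, LinearMap.smul_apply,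
          smul_eq_mul, ha_symm v u]
        ring
      have h3 : (0:ℝ) ≤ a (u + t • v) (u + t • v) :=
        le_trans (by positivity) (ha_lower (u + t • v))
      rw [h2] at h3
      exact h3
    have hdisc := discrim_le_zero hq
    rw [discrim] at hdisc
    have h5 : (a u v) ^ 2 ≤ (a v v) * (a u u) := by nlinarith [hdisc]
    have h6 : a u u ≤ C_a ^ 2 * ‖u‖ ^ 2 := ha_upper u
    have h7 : a v v ≤ C_a ^ 2 * ‖v‖ ^ 2 := ha_upper v
    have h8 : (0:ℝ) ≤ a u u := le_trans (by positivity) (ha_lower u)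
    have h9 : (0:ℝ) ≤ a v v := le_trans (by positivity) (ha_lower v)
    have hy : (0:ℝ) ≤ C_a ^ 2 * ‖u‖ * ‖v‖ := by positivity
    have hx2 : (a u v) ^ 2 ≤ (C_a ^ 2 * ‖u‖ * ‖v‖) ^ 2 := by
      nlinarith [norm_nonneg u, norm_nonneg v, sq_nonneg (‖u‖ * ‖v‖)]
    exact abs_le.mpr (abs_le_of_sq_le_sq' hx2 hy)
  -- step 1: solve for u1
  have hF1 : ∀ v : V, |((f : V →ₗ[ℝ] ℝ) + d.flip p0) v|
      ≤ (‖f‖ + C_d * ‖ιQ p0‖) * ‖v‖ := by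
    intro v
    have h1 : |f v| ≤ ‖f‖ * ‖v‖ := by
      simpa [Real.norm_eq_abs] using f.le_opNorm v
    have h2 := hd_bound v p0
    simp only [LinearMap.add_apply, ContinuousLinearMap.coe_coe, LinearMap.flip_apply]
    calc |f v + d v p0| ≤ |f v| + |d v p0| := abs_add_le _ _
      _ ≤ ‖f‖ * ‖v‖ + C_d * ‖v‖ * ‖ιQ p0‖ := add_le_add h1 h2
      _ = (‖f‖ + C_d * ‖ιQ p0‖) * ‖v‖ := by ring
  obtain ⟨u1, hu1, hu1uniq⟩ :=
    laxMilgram_existsUnique a (C_a ^ 2) c_a (‖f‖ + C_d * ‖ιQ p0‖) hca ha_cs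
      (fun u => by simpa [sq] using ha_lower u)
      ((f : V →ₗ[ℝ] ℝ) + d.flip p0) hF1
  -- b bound
  have hb_bound : ∀ (u : V) (p q : Q), |b u p q| ≤ L_b * ‖p‖ * ‖q‖ := by
    intro u p q
    have := hb_lipp u p 0 q
    simpa using this
  -- step 2: solve for p1
  set B2 : Q →ₗ[ℝ] Q →ₗ[ℝ] ℝ := c + τ • b u1 with hB2
  have hB2app : ∀ p q, B2 p q = c p q + τ * b u1 p q := by
    intro p q
    simp [hB2, LinearMap.add_apply, LinearMap.smul_apply, smul_eq_mul]
  have hB2bound : ∀ p q, |B2 p q| ≤ (C_c * ‖ιQ‖ ^ 2 + τ * L_b) * ‖p‖ * ‖q‖ := by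
    intro p q
    rw [hB2app]
    have h1 := hc_bound p q
    have h2 := hb_bound u1 p q
    have h3 := ιQ.le_opNorm p
    have h4 := ιQ.le_opNorm q
    have hkey : ‖ιQ p‖ * ‖ιQ q‖ ≤ (‖ιQ‖ * ‖p‖) * (‖ιQ‖ * ‖q‖) :=
      mul_le_mul h3 h4 (norm_nonneg _) (by positivity)
    have h5 : |c p q| ≤ C_c * ‖ιQ‖ ^ 2 * ‖p‖ * ‖q‖ := by
      calc |c p q| ≤ C_c * ‖ιQ p‖ * ‖ιQ q‖ := h1
        _ = C_c * (‖ιQ p‖ * ‖ιQ q‖) := by ring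
        _ ≤ C_c * ((‖ιQ‖ * ‖p‖) * (‖ιQ‖ * ‖q‖)) := mul_le_mul_of_nonneg_left hkey hCc.le
        _ = C_c * ‖ιQ‖ ^ 2 * ‖p‖ * ‖q‖ := by ring
    have habs : |c p q + τ * b u1 p q| ≤ |c p q| + τ * |b u1 p q| := by
      have h6 := abs_add_le (c p q) (τ * b u1 p q)
      rwa [abs_mul, abs_of_pos hτ] at h6
    calc |c p q + τ * b u1 p q| ≤ |c p q| + τ * |b u1 p q| := habs
      _ ≤ C_c * ‖ιQ‖ ^ 2 * ‖p‖ * ‖q‖ + τ * (L_b * ‖p‖ * ‖q‖) :=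
          add_le_add h5 (mul_le_mul_of_nonneg_left h2 hτ.le)
      _ = (C_c * ‖ιQ‖ ^ 2 + τ * L_b) * ‖p‖ * ‖q‖ := by ring
  have hB2coer : ∀ p, (τ * c_b) * ‖p‖ ^ 2 ≤ B2 p p := by
    intro p
    rw [hB2app]
    have h1 := hc_lower p
    have h2 := hb_coer u1 p
    nlinarith [norm_nonneg (ιQ p)]
  set F2 : Q →ₗ[ℝ] ℝ := τ • (g : Q →ₗ[ℝ] ℝ) + c p0 - d (u1 - u0) with hF2def
  have hF2app : ∀ q, F2 q = τ * g q + c p0 q - d (u1 - u0) q := by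
    intro q
    simp [hF2def, LinearMap.add_apply, LinearMap.sub_apply, LinearMap.smul_apply, smul_eq_mul]
  have hF2 : ∀ q, |F2 q|
      ≤ (τ * ‖g‖ + C_c * ‖ιQ p0‖ * ‖ιQ‖ + C_d * ‖u1 - u0‖ * ‖ιQ‖) * ‖q‖ := by
    intro q
    rw [hF2app]
    have h1 : |g q| ≤ ‖g‖ * ‖q‖ := by simpa [Real.norm_eq_abs] using g.le_opNorm q
    have h2 := hc_bound p0 q
    have h3 := hd_bound (u1 - u0) q
    have h4 := ιQ.le_opNorm q
    have h5 : |τ * g q + c p0 q - d (u1 - u0) q|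
        ≤ τ * |g q| + |c p0 q| + |d (u1 - u0) q| := by
      calc |τ * g q + c p0 q - d (u1 - u0) q|
          ≤ |τ * g q + c p0 q| + |d (u1 - u0) q| := abs_sub _ _
        _ ≤ |τ * g q| + |c p0 q| + |d (u1 - u0) q| := by
            gcongr; exact abs_add_le _ _
        _ = τ * |g q| + |c p0 q| + |d (u1 - u0) q| := by
            rw [abs_mul, abs_of_pos hτ]
    refine h5.trans ?_
    have hn1 : (0:ℝ) ≤ ‖ιQ p0‖ := norm_nonneg _
    have hn2 : (0:ℝ) ≤ ‖u1 - u0‖ := norm_nonneg _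
    have hn3 : (0:ℝ) ≤ ‖q‖ := norm_nonneg _
    have hn4 : (0:ℝ) ≤ ‖ιQ q‖ := norm_nonneg _
    have hc1 : |c p0 q| ≤ C_c * ‖ιQ p0‖ * ‖ιQ‖ * ‖q‖ := by
      calc |c p0 q| ≤ C_c * ‖ιQ p0‖ * ‖ιQ q‖ := h2
        _ ≤ C_c * ‖ιQ p0‖ * (‖ιQ‖ * ‖q‖) :=
            mul_le_mul_of_nonneg_left h4 (by positivity)
        _ = C_c * ‖ιQ p0‖ * ‖ιQ‖ * ‖q‖ := by ring
    have hd1 : |d (u1 - u0) q| ≤ C_d * ‖u1 - u0‖ * ‖ιQ‖ * ‖q‖ := by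
      rcases eq_or_ne q 0 with rfl | hq0
      · simp
      · have hq1 : ιQ q ≠ 0 := fun h => hq0 (hιQ (by simpa using h))
        have hq2 : 0 < ‖ιQ q‖ := norm_pos_iff.mpr hq1
        have hs : 0 ≤ C_d * ‖u1 - u0‖ := by
          by_contra hneg
          push_neg at hneg
          nlinarith [abs_nonneg (d (u1 - u0) q), h3]
        calc |d (u1 - u0) q| ≤ C_d * ‖u1 - u0‖ * ‖ιQ q‖ := h3
          _ ≤ C_d * ‖u1 - u0‖ * (‖ιQ‖ * ‖q‖) := mul_le_mul_of_nonneg_left h4 hs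
          _ = C_d * ‖u1 - u0‖ * ‖ιQ‖ * ‖q‖ := by ring
    have hg1 : τ * |g q| ≤ τ * (‖g‖ * ‖q‖) := mul_le_mul_of_nonneg_left h1 hτ.le
    nlinarith [hg1, hc1, hd1]
  obtain ⟨p1, hp1, hp1uniq⟩ :=
    laxMilgram_existsUnique B2 (C_c * ‖ιQ‖ ^ 2 + τ * L_b) (τ * c_b)
      (τ * ‖g‖ + C_c * ‖ιQ p0‖ * ‖ιQ‖ + C_d * ‖u1 - u0‖ * ‖ιQ‖)
      (mul_pos hτ hcb) hB2bound hB2coer F2 hF2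
  -- assemble
  have hu1' : ∀ v, a u1 v = f v + d v p0 := by
    intro v
    have := hu1 v
    simpa [LinearMap.add_apply, LinearMap.flip_apply] using this
  have hp1' : ∀ q, c p1 q + τ * b u1 p1 q = τ * g q + c p0 q - d (u1 - u0) q := by
    intro q
    have := hp1 q
    rw [hB2app, hF2app] at this
    exact this
  refine ⟨(u1, p1), ⟨fun v => by have := hu1' v; linarith, fun q => ?_⟩, ?_⟩
  · have h := hp1' q
    have hcs : c (p1 - p0) q = c p1 q - c p0 q := by
      rw [map_sub, LinearMap.sub_apply]
    simp only [hcs]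
    linarith
  · rintro ⟨u, p⟩ ⟨h1, h2⟩
    have hu : u = u1 := by
      refine hu1uniq u fun v => ?_
      have := h1 v
      simp only [LinearMap.add_apply, LinearMap.flip_apply, ContinuousLinearMap.coe_coe]
      linarith
    subst hu
    have hp : p = p1 := by
      refine hp1uniq p fun q => ?_
      rw [hB2app, hF2app]
      have := h2 q
      have hcs : c (p - p0) q = c p q - c p0 q := by
        rw [map_sub, LinearMap.sub_apply]
      rw [hcs] at this
      linarith
    rw [hp]
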